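/- For odd primes p and q with p ≠ q, letting m = (p-1)/2, the sum over a from 1 to m of floor(2*q*a/p) is congruent modulo 2 to the sum over a from 1 to m of floor(q*a/p). -/

import Mathlib

open Finset

private lemma double_div (p n : ℕ) (hp : p % 2 = 1) :
    (2 * n) / p = 2 * (n / p) + (if p / 2 < n % p then 1 else 0) := by
  have hp0 : 0 < p := by omega
  set d := n / p with hd
  set r := n % p with hr
  have hrp : r < p := Nat.mod_lt _ hp0
  have hdr : n = p * d + r := (Nat.div_add_mod n p).symm
  have h2n : 2 * n = 2 * r + (2 * d) * p := by rw [hdr]; ring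
  rw [h2n, Nat.add_mul_div_right _ _ hp0]
  by_cases hc : p / 2 < r
  · rw [if_pos hc]
    have h1 : 2 * r / p = 1 := Nat.div_eq_of_lt_le (by omega) (by omega)
    omega
  · rw [if_neg hc]
    have h1 : 2 * r / p = 0 := Nat.div_eq_of_lt (by omega)
    omega

theorem stmt_2 (p q : ℕ) (hp : p.Prime) (hq : q.Prime) (hp2 : p ≠ 2) (hq2 : q ≠ 2)
    (hpq : p ≠ q) :
    (∑ a ∈ Finset.Icc 1 ((p - 1) / 2), ⌊(2 * (q : ℚ) * (a : ℚ)) / (p : ℚ)⌋) ≡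
      (∑ a ∈ Finset.Icc 1 ((p - 1) / 2), ⌊((q : ℚ) * (a : ℚ)) / (p : ℚ)⌋) [ZMOD 2] := by
  haveI : Fact p.Prime := ⟨hp⟩
  have hpodd : p % 2 = 1 := Nat.odd_iff.mp (hp.odd_of_ne_two hp2)
  haveI : Fact (p % 2 = 1) := ⟨hpodd⟩
  have hqodd : q % 2 = 1 := Nat.odd_iff.mp (hq.odd_of_ne_two hq2)
  have hq0 : (q : ZMod p) ≠ 0 := fun h =>
    hpq ((Nat.prime_dvd_prime_iff_eq hp hq).mp ((ZMod.natCast_eq_zero_iff q p).mp h))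
  have hIcc : Finset.Icc 1 ((p - 1) / 2) = Finset.Ico 1 (p / 2).succ := by
    have hm : (p - 1) / 2 = p / 2 := by omega
    rw [hm, Nat.succ_eq_add_one, Finset.Ico_add_one_right_eq_Icc]
  have h1 : ∀ a : ℕ, ⌊(2 * (q : ℚ) * a) / p⌋ = ((2 * (q * a)) / p : ℕ) := by
    intro a
    rw [show (2 * (q : ℚ) * a) = ((2 * (q * a) : ℕ) : ℚ) by push_cast; ring]
    exact Rat.floor_natCast_div_natCast _ _
  have h2 : ∀ a : ℕ, ⌊((q : ℚ) * a) / p⌋ = ((q * a) / p : ℕ) := by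
    intro a
    rw [show ((q : ℚ) * a) = ((q * a : ℕ) : ℚ) by push_cast; ring]
    exact Rat.floor_natCast_div_natCast _ _
  simp only [hIcc, h1, h2]
  rw [← Nat.cast_sum, ← Nat.cast_sum, show ((2:ℤ)) = ((2:ℕ):ℤ) from rfl, Int.natCast_modEq_iff]
  -- now a Nat.ModEq statement
  have hsplit : ∑ x ∈ Ico 1 (p / 2).succ, 2 * (q * x) / p
      = 2 * (∑ x ∈ Ico 1 (p / 2).succ, q * x / p) +
        ∑ x ∈ Ico 1 (p / 2).succ, (if p / 2 < (q * x) % p then 1 else 0) := by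
    rw [Finset.mul_sum, ← Finset.sum_add_distrib]
    exact Finset.sum_congr rfl fun x _ => double_div p (q * x) hpodd
  have hcard : ∑ x ∈ Ico 1 (p / 2).succ, (if p / 2 < (q * x) % p then 1 else 0)
      = #{x ∈ Ico 1 (p / 2).succ | p / 2 < ((q : ZMod p) * (x : ℕ)).val} := by
    have hval : ∀ x : ℕ, ((q : ZMod p) * (x : ℕ) : ZMod p).val = (q * x) % p := fun x => by
      rw [← Nat.cast_mul, ZMod.val_natCast]
    simp only [hval]
    rw [Finset.sum_boole, Nat.cast_id]
  have heis := ZMod.eisenstein_lemma_aux p (a := q) hqodd hq0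
  have heis' : #{x ∈ Ico 1 (p / 2).succ | p / 2 < ((q : ZMod p) * (x : ℕ)).val} ≡
      ∑ x ∈ Ico 1 (p / 2).succ, q * x / p [MOD 2] := by
    simpa [mul_comm] using heis
  calc ∑ x ∈ Ico 1 (p / 2).succ, 2 * (q * x) / p
      = 2 * (∑ x ∈ Ico 1 (p / 2).succ, q * x / p) +
        #{x ∈ Ico 1 (p / 2).succ | p / 2 < ((q : ZMod p) * (x : ℕ)).val} := by
        rw [hsplit, hcard]
    _ ≡ 0 + ∑ x ∈ Ico 1 (p / 2).succ, q * x / p [MOD 2] :=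
        Nat.ModEq.add (Nat.modEq_zero_iff_dvd.mpr ⟨_, rfl⟩) heis'
    _ = ∑ x ∈ Ico 1 (p / 2).succ, q * x / p := by rw [zero_add]
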